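/- For any α > 0 and c > 0, the function (x, y) ↦ ₀F₁(α; c·x·y) is strictly TP₂ on (0,∞)², i.e., ∂²/∂x∂y log ₀F₁(α; cxy) > 0 for all x, y > 0. -/

import Mathlib

open Real Filter

namespace Stmt8

noncomputable def a (α : ℝ) (n : ℕ) : ℝ :=
  Real.Gamma α / (Real.Gamma (α + n) * (Nat.factorial n))

lemma a_pos {α : ℝ} (hα : 0 < α) (n : ℕ) : 0 < a α n := by
  have h1 : 0 < α + n := add_pos_of_pos_of_nonneg hα (Nat.cast_nonneg n)
  exact div_pos (Real.Gamma_pos_of_pos hα)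
    (mul_pos (Real.Gamma_pos_of_pos h1) (by positivity))

lemma a_succ {α : ℝ} (hα : 0 < α) (n : ℕ) :
    a α (n + 1) = a α n * (1 / ((α + n) * ((n : ℝ) + 1))) := by
  have h1 : 0 < α + n := add_pos_of_pos_of_nonneg hα (Nat.cast_nonneg n)
  have hΓ : Real.Gamma (α + n) ≠ 0 := (Real.Gamma_pos_of_pos h1).ne'
  have hf : (Nat.factorial n : ℝ) ≠ 0 := by
    exact_mod_cast (Nat.factorial_pos n).ne'
  unfold a
  rw [Nat.factorial_succ]
  push_cast
  rw [show α + ((n : ℝ) + 1) = (α + n) + 1 by ring, Real.Gamma_add_one h1.ne']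
  rw [div_mul_div_comm, mul_one]
  congr 1
  ring

lemma summable_master {α : ℝ} (hα : 0 < α) (j : ℕ) {r : ℝ} (hr : 0 < r) :
    Summable (fun n : ℕ => ((n : ℝ) + 1) ^ j * a α n * r ^ n) := by
  apply summable_of_ratio_norm_eventually_le (r := 1/2) (by norm_num)
  obtain ⟨N, hN⟩ := exists_nat_ge ((2:ℝ) ^ (j+1) * r)
  filter_upwards [eventually_ge_atTop (max N 1)] with n hn
  have hn1 : (1:ℕ) ≤ n := le_trans (le_max_right N 1) hn
  have hnN : (N:ℝ) ≤ n := Nat.cast_le.mpr (le_trans (le_max_left N 1) hn)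
  have hnpos : (0:ℝ) < n := by exact_mod_cast hn1
  have h1 : 0 < α + n := add_pos_of_pos_of_nonneg hα (Nat.cast_nonneg n)
  have hterm : ∀ m : ℕ, 0 < ((m:ℝ)+1) ^ j * a α m * r ^ m := fun m =>
    mul_pos (mul_pos (pow_pos (by positivity) j) (a_pos hα m)) (pow_pos hr m)
  rw [Real.norm_eq_abs, Real.norm_eq_abs, abs_of_pos (hterm _), abs_of_pos (hterm _)]
  rw [a_succ hα n]
  push_cast
  have h2N : (2:ℝ)^(j+1) * r ≤ n := le_trans hN hnN
  have key1 : ((n:ℝ)+1+1)^j ≤ 2^j * ((n:ℝ)+1)^j := by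
    rw [← mul_pow]
    exact pow_le_pow_left₀ (by positivity) (by linarith) j
  have key2 : r / ((α+n)*((n:ℝ)+1)) ≤ 1 / 2^(j+1) := by
    rw [div_le_div_iff₀ (by positivity) (by positivity)]
    nlinarith [hα, hnpos]
  have ha := (a_pos hα n).le
  have hrn := (pow_pos hr n).le
  calc ((n:ℝ)+1+1)^j * (a α n * (1 / ((α+n)*((n:ℝ)+1)))) * r^(n+1)
      = (((n:ℝ)+1+1)^j) * (a α n * r^n) * (r / ((α+n)*((n:ℝ)+1))) := by
        rw [pow_succ]; field_simp
    _ ≤ (2^j * ((n:ℝ)+1)^j) * (a α n * r^n) * (1 / 2^(j+1)) := by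
        apply mul_le_mul (mul_le_mul key1 le_rfl (by positivity) (by positivity)) key2
          (by positivity) (by positivity)
    _ = 1/2 * (((n:ℝ)+1)^j * a α n * r^n) := by
        rw [pow_succ]; field_simp

lemma summable_shift {α : ℝ} (hα : 0 < α) (j k : ℕ) {r : ℝ} (hr : 0 < r) :
    Summable (fun n : ℕ => ((n : ℝ) + k + 1) ^ j * a α (n + k) * r ^ n) := by
  have h := (summable_nat_add_iff (f := fun n : ℕ => ((n : ℝ) + 1) ^ j * a α n * r ^ n) k).mpr
    (summable_master hα j hr)
  have h2 := h.mul_left ((r ^ k)⁻¹)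
  apply h2.congr
  intro n
  have hrk : (r : ℝ) ^ k ≠ 0 := by positivity
  push_cast
  rw [pow_add]
  field_simp

lemma tsum_shift (k : ℕ) (f : ℕ → ℝ) (hf : ∀ m < k, f m = 0) :
    ∑' n : ℕ, f (n + k) = ∑' n, f n := by
  apply Function.Injective.tsum_eq (add_left_injective k)
  intro m hm
  rcases le_or_gt k m with h | h
  · exact ⟨m - k, Nat.sub_add_cancel h⟩
  · exact absurd (hf m h) hm

lemma hasDerivAt_tsum_pow (g : ℕ → ℝ)
    (hg : ∀ r : ℝ, 0 < r → Summable fun n : ℕ => ((n : ℝ) + 1) * |g n| * r ^ n)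
    (t : ℝ) :
    HasDerivAt (fun x : ℝ => ∑' n : ℕ, g n * x ^ n)
      (∑' n : ℕ, (n : ℝ) * g n * t ^ (n - 1)) t := by
  have hRpos : (0:ℝ) < |t| + 1 := by positivity
  set R := |t| + 1 with hRdef
  have hR1 : (1:ℝ) ≤ R := by rw [hRdef]; linarith [abs_nonneg t]
  have hu : Summable (fun n : ℕ => ((n:ℝ)+1) * |g n| * R ^ n) := hg R hRpos
  have htmem : t ∈ Metric.ball (0:ℝ) R := by
    simp [Metric.mem_ball, Real.dist_eq, hRdef]
  have bound : ∀ (n : ℕ), ∀ y ∈ Metric.ball (0:ℝ) R,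
      ‖(n:ℝ) * g n * y ^ (n - 1)‖ ≤ ((n:ℝ)+1) * |g n| * R ^ n := by
    intro n y hy
    have hyR : |y| ≤ R := by
      have := Metric.mem_ball.mp hy
      rw [Real.dist_eq, sub_zero] at this
      exact this.le
    rw [Real.norm_eq_abs, abs_mul, abs_mul, abs_pow, Nat.abs_cast]
    have h1 : |y| ^ (n-1) ≤ R ^ n := by
      calc |y| ^ (n-1) ≤ R ^ (n-1) := pow_le_pow_left₀ (abs_nonneg y) hyR _
        _ ≤ R ^ n := pow_le_pow_right₀ hR1 (Nat.sub_le n 1)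
    have h2 : (n:ℝ) ≤ (n:ℝ) + 1 := by linarith
    apply mul_le_mul (mul_le_mul h2 le_rfl (abs_nonneg _) (by positivity))
      h1 (by positivity) (by positivity)
  have hf0 : Summable (fun n : ℕ => g n * t ^ n) := by
    apply Summable.of_norm_bounded hu
    intro n
    rw [Real.norm_eq_abs, abs_mul, abs_pow]
    have h1 : |t| ^ n ≤ R ^ n :=
      pow_le_pow_left₀ (abs_nonneg t) (by rw [hRdef]; linarith [abs_nonneg t]) n
    have h3 : 0 ≤ (n:ℝ) * (|g n| * R ^ n) := by positivity
    have h4 : |g n| * |t| ^ n ≤ |g n| * R ^ n := mul_le_mul_of_nonneg_left h1 (abs_nonneg _)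
    nlinarith [h3, h4]
  exact hasDerivAt_tsum_of_isPreconnected (g := fun n y => g n * y ^ n)
      (g' := fun n y => (n:ℝ) * g n * y ^ (n - 1)) hu Metric.isOpen_ball
    (convex_ball (0:ℝ) R).isPreconnected
    (fun n y _ => by
      have h := HasDerivAt.const_mul (g n) (hasDerivAt_pow n y)
      convert h using 1
      exacts [rfl, by ring])
    bound htmem hf0 htmem

noncomputable def F (α t : ℝ) : ℝ := ∑' n : ℕ, a α n * t ^ n
noncomputable def bb (α : ℝ) (n : ℕ) : ℝ := ((n:ℝ)+1) * a α (n+1)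
noncomputable def cc (α : ℝ) (n : ℕ) : ℝ := ((n:ℝ)+1) * bb α (n+1)
noncomputable def F1 (α t : ℝ) : ℝ := ∑' n : ℕ, bb α n * t ^ n
noncomputable def F2 (α t : ℝ) : ℝ := ∑' n : ℕ, cc α n * t ^ n

lemma bb_pos {α : ℝ} (hα : 0 < α) (n : ℕ) : 0 < bb α n :=
  mul_pos (by positivity) (a_pos hα (n+1))

lemma hyp_a {α : ℝ} (hα : 0 < α) :
    ∀ r : ℝ, 0 < r → Summable fun n : ℕ => ((n : ℝ) + 1) * |a α n| * r ^ n := by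
  intro r hr
  exact (summable_master hα 1 hr).congr fun n => by
    rw [pow_one, abs_of_pos (a_pos hα n)]

lemma hyp_b {α : ℝ} (hα : 0 < α) :
    ∀ r : ℝ, 0 < r → Summable fun n : ℕ => ((n : ℝ) + 1) * |bb α n| * r ^ n := by
  intro r hr
  have h := summable_shift hα 2 1 hr
  apply Summable.of_nonneg_of_le (fun n => by positivity) ?_ h
  intro n
  rw [abs_of_pos (bb_pos hα n), bb]
  push_cast
  have ha := (a_pos hα (n+1)).le
  have hrn := (pow_pos hr n).le
  calc ((n:ℝ)+1) * (((n:ℝ)+1) * a α (n+1)) * r^n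
      = (((n:ℝ)+1) * ((n:ℝ)+1)) * (a α (n+1) * r^n) := by ring
    _ ≤ (((n:ℝ)+1+1) * ((n:ℝ)+1+1)) * (a α (n+1) * r^n) := by
        apply mul_le_mul ?_ le_rfl (by positivity) (by positivity)
        nlinarith [Nat.cast_nonneg (α := ℝ) n]
    _ = ((n:ℝ)+1+1)^2 * a α (n+1) * r^n := by ring

lemma hyp_c {α : ℝ} (hα : 0 < α) :
    ∀ r : ℝ, 0 < r → Summable fun n : ℕ => ((n : ℝ) + 1) * |cc α n| * r ^ n := by
  intro r hr
  have h := summable_shift hα 3 2 hr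
  apply Summable.of_nonneg_of_le (fun n => by positivity) ?_ h
  intro n
  have hcc : cc α n = ((n:ℝ)+1) * (((n:ℝ)+2) * a α (n+2)) := by
    rw [cc, bb]; push_cast; ring_nf
  have hccpos : 0 < cc α n := by
    rw [hcc]
    exact mul_pos (by positivity) (mul_pos (by positivity) (a_pos hα (n+2)))
  rw [abs_of_pos hccpos, hcc]
  have ha := (a_pos hα (n+2)).le
  have hrn := (pow_pos hr n).le
  calc ((n:ℝ)+1) * (((n:ℝ)+1) * (((n:ℝ)+2) * a α (n+2))) * r^n
      = (((n:ℝ)+1) * ((n:ℝ)+1) * ((n:ℝ)+2)) * (a α (n+2) * r^n) := by ring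
    _ ≤ (((n:ℝ)+2+1) * ((n:ℝ)+2+1) * ((n:ℝ)+2+1)) * (a α (n+2) * r^n) := by
        apply mul_le_mul ?_ le_rfl (mul_nonneg ha hrn) (by positivity)
        nlinarith [Nat.cast_nonneg (α := ℝ) n]
    _ = ((n:ℝ)+2+1)^3 * a α (n+2) * r^n := by ring

lemma hasDerivAt_F {α : ℝ} (hα : 0 < α) (t : ℝ) : HasDerivAt (F α) (F1 α t) t := by
  have h := hasDerivAt_tsum_pow (a α) (hyp_a hα) t
  have he : F1 α t = ∑' n : ℕ, (n : ℝ) * a α n * t ^ (n - 1) := by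
    rw [F1, ← tsum_shift 1 (fun n : ℕ => (n : ℝ) * a α n * t ^ (n - 1))
      (by intro m hm; interval_cases m; simp)]
    apply tsum_congr
    intro n
    rw [bb]
    push_cast
    simp only [Nat.add_sub_cancel]
  rw [show F α = fun x => ∑' n : ℕ, a α n * x ^ n from rfl, he]
  exact h

lemma hasDerivAt_F1 {α : ℝ} (hα : 0 < α) (t : ℝ) : HasDerivAt (F1 α) (F2 α t) t := by
  have h := hasDerivAt_tsum_pow (bb α) (hyp_b hα) t
  have he : F2 α t = ∑' n : ℕ, (n : ℝ) * bb α n * t ^ (n - 1) := by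
    rw [F2, ← tsum_shift 1 (fun n : ℕ => (n : ℝ) * bb α n * t ^ (n - 1))
      (by intro m hm; interval_cases m; simp)]
    apply tsum_congr
    intro n
    rw [cc]
    push_cast
    simp only [Nat.add_sub_cancel]
  rw [show F1 α = fun x => ∑' n : ℕ, bb α n * x ^ n from rfl, he]
  exact h

lemma summable_F {α : ℝ} (hα : 0 < α) {t : ℝ} (ht : 0 < t) :
    Summable (fun n : ℕ => a α n * t ^ n) :=
  (summable_master hα 0 ht).congr fun n => by rw [pow_zero, one_mul]

lemma F_pos {α : ℝ} (hα : 0 < α) {t : ℝ} (ht : 0 < t) : 0 < F α t := by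
  have hs := summable_F hα ht
  have h0 : a α 0 * t ^ 0 ≤ F α t :=
    Summable.le_tsum hs 0 (fun j _ => mul_nonneg (a_pos hα j).le (pow_nonneg ht.le j))
  have h1 : 0 < a α 0 * t ^ 0 := mul_pos (a_pos hα 0) (pow_pos ht 0)
  linarith

noncomputable def S (α : ℝ) (j : ℕ) (t : ℝ) : ℝ := ∑' n : ℕ, (n:ℝ)^j * a α n * t^n

lemma summable_S {α : ℝ} (hα : 0 < α) (j : ℕ) {t : ℝ} (ht : 0 < t) :
    Summable (fun n : ℕ => (n:ℝ)^j * a α n * t^n) := by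
  apply Summable.of_nonneg_of_le
    (fun n => mul_nonneg (mul_nonneg (pow_nonneg (Nat.cast_nonneg n) j) (a_pos hα n).le)
      (pow_nonneg ht.le n))
    (fun n => ?_) (summable_master hα j ht)
  apply mul_le_mul ?_ le_rfl (pow_nonneg ht.le n) (mul_nonneg (by positivity) (a_pos hα n).le)
  apply mul_le_mul ?_ le_rfl (a_pos hα n).le (by positivity)
  exact pow_le_pow_left₀ (Nat.cast_nonneg n) (by linarith) j

lemma S0_eq {α t : ℝ} : S α 0 t = F α t := by
  rw [S, F]
  exact tsum_congr fun n => by rw [pow_zero, one_mul]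

lemma S1_eq {α : ℝ} (t : ℝ) : S α 1 t = t * F1 α t := by
  rw [F1, ← tsum_mul_left, S,
    ← tsum_shift 1 (fun n : ℕ => (n:ℝ)^1 * a α n * t^n) (by intro m hm; interval_cases m; simp)]
  apply tsum_congr
  intro n
  rw [bb]
  push_cast
  ring

lemma S2_eq {α : ℝ} (hα : 0 < α) {t : ℝ} (ht : 0 < t) :
    S α 2 t - S α 1 t = t^2 * F2 α t := by
  have h2 := summable_S hα 2 ht
  have h1 := summable_S hα 1 ht
  rw [S, S, ← Summable.tsum_sub h2 h1, F2, ← tsum_mul_left,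
    ← tsum_shift 2 (fun n : ℕ => (n:ℝ)^2 * a α n * t^n - (n:ℝ)^1 * a α n * t^n)
      (by intro m hm; interval_cases m <;> simp)]
  apply tsum_congr
  intro n
  rw [cc, bb]
  push_cast
  ring

lemma key_ineq {α : ℝ} (hα : 0 < α) {t : ℝ} (ht : 0 < t) :
    S α 1 t ^ 2 < S α 0 t * S α 2 t := by
  have h0 := summable_S hα 0 ht
  have h1 := summable_S hα 1 ht
  have h2 := summable_S hα 2 ht
  have hnn : ∀ (j : ℕ) (n : ℕ), 0 ≤ (n:ℝ)^j * a α n * t^n := fun j n =>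
    mul_nonneg (mul_nonneg (pow_nonneg (Nat.cast_nonneg n) j) (a_pos hα n).le)
      (pow_nonneg ht.le n)
  have hS0 : 0 < S α 0 t := by rw [S0_eq]; exact F_pos hα ht
  have hS1 : 0 < S α 1 t := by
    have hle : ((1:ℕ):ℝ)^1 * a α 1 * t^1 ≤ S α 1 t := Summable.le_tsum h1 1 (fun j _ => hnn 1 j)
    have : 0 < ((1:ℕ):ℝ)^1 * a α 1 * t^1 := by
      simp only [Nat.cast_one, one_pow, one_mul, pow_one]
      exact mul_pos (a_pos hα 1) ht
    linarith
  set s0 := S α 0 t with hs0d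
  set s1 := S α 1 t with hs1d
  set s2 := S α 2 t with hs2d
  have hexp : ∀ n : ℕ, (a α n * t^n) * ((n:ℝ) * s0 - s1)^2
      = (s0^2 * ((n:ℝ)^2 * a α n * t^n) - (2*s0*s1) * ((n:ℝ)^1 * a α n * t^n))
        + s1^2 * ((n:ℝ)^0 * a α n * t^n) := fun n => by ring
  have hsa : Summable (fun n : ℕ =>
      s0^2 * ((n:ℝ)^2 * a α n * t^n) - (2*s0*s1) * ((n:ℝ)^1 * a α n * t^n)) :=
    (h2.mul_left _).sub (h1.mul_left _)
  have hsb : Summable (fun n : ℕ => s1^2 * ((n:ℝ)^0 * a α n * t^n)) := h0.mul_left _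
  have hsum_all : Summable (fun n : ℕ => (a α n * t^n) * ((n:ℝ) * s0 - s1)^2) :=
    (hsa.add hsb).congr fun n => (hexp n).symm
  have hT : ∑' n : ℕ, (a α n * t^n) * ((n:ℝ) * s0 - s1)^2
      = s0^2 * s2 - (2*s0*s1) * s1 + s1^2 * s0 := by
    calc ∑' n : ℕ, (a α n * t^n) * ((n:ℝ) * s0 - s1)^2
        = ∑' n : ℕ, ((s0^2 * ((n:ℝ)^2 * a α n * t^n) - (2*s0*s1) * ((n:ℝ)^1 * a α n * t^n))
            + s1^2 * ((n:ℝ)^0 * a α n * t^n)) := tsum_congr hexp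
      _ = s0^2 * s2 - (2*s0*s1) * s1 + s1^2 * s0 := by
          rw [Summable.tsum_add hsa hsb, Summable.tsum_sub (h2.mul_left _) (h1.mul_left _),
            tsum_mul_left, tsum_mul_left, tsum_mul_left, hs0d, hs1d, hs2d, S, S, S]
  have hlb : (a α 0 * t^0) * (((0:ℕ):ℝ) * s0 - s1)^2
      ≤ ∑' n : ℕ, (a α n * t^n) * ((n:ℝ) * s0 - s1)^2 :=
    Summable.le_tsum hsum_all 0 (fun j _ =>
      mul_nonneg (mul_nonneg (a_pos hα j).le (pow_nonneg ht.le j)) (sq_nonneg _))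
  rw [hT] at hlb
  have ha0 : 0 < a α 0 := a_pos hα 0
  have hlb2 : a α 0 * s1^2 ≤ s0 * (s0 * s2 - s1^2) := by
    have : (a α 0 * t^0) * (((0:ℕ):ℝ) * s0 - s1)^2 = a α 0 * s1^2 := by
      push_cast; ring
    nlinarith [hlb]
  have hpos : 0 < s0 * (s0 * s2 - s1^2) :=
    lt_of_lt_of_le (mul_pos ha0 (pow_pos hS1 2)) hlb2
  have := (mul_pos_iff_of_pos_left hS0).mp hpos
  linarith

end Stmt8

open Stmt8 Filter

/-- For `α > 0`, `c > 0`, the function `(x,y) ↦ ₀F₁(α; cxy)` is strictly TP₂ on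
`(0,∞)²`: the mixed second partial of its logarithm is positive. -/
theorem stmt_8 (α c : ℝ) (hα : 0 < α) (hc : 0 < c)
    (h : ℝ → ℝ → ℝ)
    (hh : ∀ x y : ℝ, h x y =
      ∑' k : ℕ, (c * x * y) ^ k * Real.Gamma α / (Real.Gamma (α + k) * (Nat.factorial k))) :
    ∀ x > (0:ℝ), ∀ y > (0:ℝ),
      0 < deriv (fun y' => deriv (fun x' => Real.log (h x' y')) x) y := by
  intro x hx y hy
  have hhF : ∀ x' y' : ℝ, h x' y' = F α (c * x' * y') := by
    intro x' y'
    rw [hh, F]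
    exact tsum_congr fun k => by rw [a]; ring
  -- inner derivative for y' > 0
  have inner : ∀ y' : ℝ, 0 < y' →
      deriv (fun x' => Real.log (h x' y')) x
        = c * y' * F1 α (c * x * y') / F α (c * x * y') := by
    intro y' hy'
    have hlin : HasDerivAt (fun x' : ℝ => c * x' * y') (c * y') x := by
      have h1 : HasDerivAt (fun x' : ℝ => c * x' * y') (c * 1 * y') x :=
        ((hasDerivAt_id x).const_mul c).mul_const y'
      simpa using h1
    have ht' : 0 < c * x * y' := mul_pos (mul_pos hc hx) hy'
    have hne : F α (c * x * y') ≠ 0 := (F_pos hα ht').ne'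
    have hcomp : HasDerivAt (fun x' : ℝ => F α (c * x' * y')) (F1 α (c * x * y') * (c * y')) x :=
      by have := (hasDerivAt_F hα (c * x * y')).comp x hlin; exact this
    have hlog : HasDerivAt (fun x' : ℝ => Real.log (F α (c * x' * y')))
        (F1 α (c * x * y') * (c * y') / F α (c * x * y')) x := hcomp.log hne
    have hfun : (fun x' : ℝ => Real.log (h x' y')) = fun x' => Real.log (F α (c * x' * y')) :=
      funext fun x' => by rw [hhF]
    rw [hfun, hlog.deriv]
    ring
  have EE : (fun y' => deriv (fun x' => Real.log (h x' y')) x)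
      =ᶠ[nhds y] (fun y' : ℝ => c * y' * F1 α (c * x * y') / F α (c * x * y')) := by
    filter_upwards [eventually_gt_nhds hy] with y' hy' using inner y' hy'
  rw [EE.deriv_eq]
  -- the outer derivative
  have hlin2 : HasDerivAt (fun y' : ℝ => c * x * y') (c * x) y := by
    simpa using (hasDerivAt_id y).const_mul (c * x)
  have hc1 : HasDerivAt (fun y' : ℝ => c * y') c y := by
    simpa using (hasDerivAt_id y).const_mul c
  have hv : HasDerivAt (fun y' : ℝ => F1 α (c * x * y')) (F2 α (c * x * y) * (c * x)) y :=
    (hasDerivAt_F1 hα (c * x * y)).comp y hlin2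
  have hnum : HasDerivAt (fun y' : ℝ => c * y' * F1 α (c * x * y'))
      (c * F1 α (c * x * y) + c * y * (F2 α (c * x * y) * (c * x))) y := hc1.mul hv
  have hden : HasDerivAt (fun y' : ℝ => F α (c * x * y')) (F1 α (c * x * y) * (c * x)) y :=
    (hasDerivAt_F hα (c * x * y)).comp y hlin2
  have ht0 : 0 < c * x * y := mul_pos (mul_pos hc hx) hy
  have hFpos : 0 < F α (c * x * y) := F_pos hα ht0
  have hne : F α (c * x * y) ≠ 0 := hFpos.ne'
  have hQ : HasDerivAt (fun y' : ℝ => c * y' * F1 α (c * x * y') / F α (c * x * y'))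
      (((c * F1 α (c * x * y) + c * y * (F2 α (c * x * y) * (c * x))) * F α (c * x * y) -
        c * y * F1 α (c * x * y) * (F1 α (c * x * y) * (c * x))) / F α (c * x * y) ^ 2) y :=
    hnum.div hden hne
  rw [hQ.deriv]
  apply div_pos ?_ (pow_pos hFpos 2)
  -- positivity of the numerator
  have hS1e : S α 1 (c * x * y) = (c * x * y) * F1 α (c * x * y) := S1_eq _
  have hS2e : S α 2 (c * x * y) - S α 1 (c * x * y) = (c * x * y)^2 * F2 α (c * x * y) :=
    S2_eq hα ht0
  have hS0e : S α 0 (c * x * y) = F α (c * x * y) := S0_eq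
  have hkey : S α 1 (c * x * y) ^ 2 < S α 0 (c * x * y) * S α 2 (c * x * y) := key_ineq hα ht0
  have hident : (c * x * y) *
      ((c * F1 α (c * x * y) + c * y * (F2 α (c * x * y) * (c * x))) * F α (c * x * y) -
        c * y * F1 α (c * x * y) * (F1 α (c * x * y) * (c * x)))
      = c * (S α 1 (c * x * y) * S α 0 (c * x * y)
          + (S α 2 (c * x * y) - S α 1 (c * x * y)) * S α 0 (c * x * y)
          - S α 1 (c * x * y) ^ 2) := by
    rw [hS2e, hS1e, hS0e]; ring
  have hpos2 : 0 < (c * x * y) *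
      ((c * F1 α (c * x * y) + c * y * (F2 α (c * x * y) * (c * x))) * F α (c * x * y) -
        c * y * F1 α (c * x * y) * (F1 α (c * x * y) * (c * x))) := by
    rw [hident]
    apply mul_pos hc
    nlinarith [hkey]
  exact (mul_pos_iff_of_pos_left ht0).mp hpos2
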